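/- Let D be a spherical convex body on S² of constant diameter δ. Then every two diametral chords of D intersect: if a, b, c, d ∈ D satisfy dist_S(a,b) = δ and dist_S(c,d) = δ, then the arc ab and the arc cd have a common point. -/

import Mathlib

open scoped RealInnerProductSpace
open Real

noncomputable section

/-- The unit sphere `S^d` in `E = EuclideanSpace ℝ (Fin (d+1))`. -/
def Sph (d : ℕ) : Set (EuclideanSpace ℝ (Fin (d + 1))) := {x | ‖x‖ = 1}

/-- Spherical distance of two points of the sphere. -/
def sdist {d : ℕ} (x y : EuclideanSpace ℝ (Fin (d + 1))) : ℝ := Real.arccos ⟪x, y⟫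

/-- The arc connecting `a` and `b`. -/
def arc {d : ℕ} (a b : EuclideanSpace ℝ (Fin (d + 1))) :
    Set (EuclideanSpace ℝ (Fin (d + 1))) :=
  {z | ∃ s ∈ Set.Icc (0 : ℝ) 1, z = ‖(1 - s) • a + s • b‖⁻¹ • ((1 - s) • a + s • b)}

/-- The hemisphere `H(c)` with center `c`. -/
def Hemi {d : ℕ} (c : EuclideanSpace ℝ (Fin (d + 1))) :
    Set (EuclideanSpace ℝ (Fin (d + 1))) :=
  {x ∈ Sph d | 0 ≤ ⟪c, x⟫}

/-- A set on the sphere is spherically convex: it lies on the sphere, contains no pair of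
antipodes, and the cone over it is a convex subset of the ambient space. -/
def SphConvex {d : ℕ} (C : Set (EuclideanSpace ℝ (Fin (d + 1)))) : Prop :=
  C ⊆ Sph d ∧ (∀ x ∈ C, -x ∉ C) ∧
    Convex ℝ {y | ∃ t : ℝ, 0 ≤ t ∧ ∃ x ∈ C, y = t • x}

/-- Interior of `C` relative to the sphere `S^d` (interior in the subspace topology). -/
def sphInterior {d : ℕ} (C : Set (EuclideanSpace ℝ (Fin (d + 1)))) :
    Set (EuclideanSpace ℝ (Fin (d + 1))) :=
  {x ∈ Sph d | ∃ ε > 0, ∀ y ∈ Sph d, dist y x < ε → y ∈ C}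

/-- Boundary of a closed set `C ⊆ S^d` relative to the sphere. -/
def sphBoundary {d : ℕ} (C : Set (EuclideanSpace ℝ (Fin (d + 1)))) :
    Set (EuclideanSpace ℝ (Fin (d + 1))) :=
  C \ sphInterior C

/-- A spherical convex body: closed, spherically convex, with nonempty interior in `S^d`. -/
def SphBody {d : ℕ} (C : Set (EuclideanSpace ℝ (Fin (d + 1)))) : Prop :=
  SphConvex C ∧ IsClosed C ∧ (sphInterior C).Nonempty

/-- `H(c)` supports `C` at `p`. -/
def SupportsAt {d : ℕ} (c : EuclideanSpace ℝ (Fin (d + 1)))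
    (C : Set (EuclideanSpace ℝ (Fin (d + 1)))) (p : EuclideanSpace ℝ (Fin (d + 1))) : Prop :=
  c ∈ Sph d ∧ C ⊆ Hemi c ∧ p ∈ C ∧ ⟪c, p⟫ = 0

/-- `H(c)` supports `C` (at some point). -/
def Supports {d : ℕ} (c : EuclideanSpace ℝ (Fin (d + 1)))
    (C : Set (EuclideanSpace ℝ (Fin (d + 1)))) : Prop :=
  ∃ p, SupportsAt c C p

/-- The width of `C` determined by the supporting hemisphere `H(a)`: the infimum of the
thicknesses `π - arccos ⟪a, b⟫` of the lunes `H(a) ∩ H(b)` containing `C`. -/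
def widthAt {d : ℕ} (a : EuclideanSpace ℝ (Fin (d + 1)))
    (C : Set (EuclideanSpace ℝ (Fin (d + 1)))) : ℝ :=
  sInf {w | ∃ b ∈ Sph d, b ≠ a ∧ b ≠ -a ∧ C ⊆ Hemi b ∧ w = π - Real.arccos ⟪a, b⟫}

/-- `C` is of constant width `w`. -/
def ConstWidth {d : ℕ} (C : Set (EuclideanSpace ℝ (Fin (d + 1)))) (w : ℝ) : Prop :=
  ∀ a, Supports a C → widthAt a C = w

/-- The diameter of `C`. -/
def sphDiam {d : ℕ} (C : Set (EuclideanSpace ℝ (Fin (d + 1)))) : ℝ :=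
  sSup {r | ∃ x ∈ C, ∃ y ∈ C, r = sdist x y}

/-- `C` is of constant diameter `δ`. -/
def ConstDiam {d : ℕ} (C : Set (EuclideanSpace ℝ (Fin (d + 1)))) (δ : ℝ) : Prop :=
  sphDiam C = δ ∧ ∀ p ∈ sphBoundary C, ∃ p' ∈ sphBoundary C, sdist p p' = δ

/-- A boundary point `p` of `C` is smooth if exactly one hemisphere supports `C` at `p`. -/
def SmoothPoint {d : ℕ} (C : Set (EuclideanSpace ℝ (Fin (d + 1))))
    (p : EuclideanSpace ℝ (Fin (d + 1))) : Prop :=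
  ∃! c, SupportsAt c C p

/-- A smooth spherical convex body: every boundary point is smooth. -/
def SmoothBody {d : ℕ} (C : Set (EuclideanSpace ℝ (Fin (d + 1)))) : Prop :=
  ∀ p ∈ sphBoundary C, SmoothPoint C p

/-- `C` is strictly convex: its boundary contains no nondegenerate arc. -/
def StrictlySphConvex {d : ℕ} (C : Set (EuclideanSpace ℝ (Fin (d + 1)))) : Prop :=
  ∀ a ∈ sphBoundary C, ∀ b ∈ sphBoundary C, a ≠ b → b ≠ -a →
    ¬ (arc a b ⊆ sphBoundary C)

/-- The polar of `C`. -/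
def sphPolar {d : ℕ} (C : Set (EuclideanSpace ℝ (Fin (d + 1)))) :
    Set (EuclideanSpace ℝ (Fin (d + 1))) :=
  {r ∈ Sph d | C ⊆ Hemi r}

section helpers

variable {d : ℕ}

local notation "E" => EuclideanSpace ℝ (Fin (d + 1))

lemma arccos_le_arccos' {x y : ℝ} (h : x ≤ y) : arccos y ≤ arccos x := by
  rw [Real.arccos_eq_pi_div_two_sub_arcsin, Real.arccos_eq_pi_div_two_sub_arcsin]
  have := Real.monotone_arcsin h
  linarith

lemma inner_le_one' {x y : E} (hx : ‖x‖ = 1) (hy : ‖y‖ = 1) : ⟪x, y⟫ ≤ 1 := by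
  have := abs_real_inner_le_norm x y
  rw [hx, hy] at this
  cases abs_le.1 this; linarith

lemma neg_one_le_inner' {x y : E} (hx : ‖x‖ = 1) (hy : ‖y‖ = 1) : -1 ≤ ⟪x, y⟫ := by
  have := abs_real_inner_le_norm x y
  rw [hx, hy] at this
  cases abs_le.1 this; linarith

lemma sdist_comm' (x y : E) : sdist x y = sdist y x := by
  rw [sdist, sdist, real_inner_comm]

lemma eq_of_sdist_eq_zero {x y : E} (hx : ‖x‖ = 1) (hy : ‖y‖ = 1)
    (h : sdist x y = 0) : x = y := by
  rw [sdist, Real.arccos_eq_zero] at h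
  have h2 := inner_le_one' hx hy
  exact (inner_eq_one_iff_of_norm_eq_one hx hy).1 (le_antisymm h2 h)

lemma inner_ne_neg_one {x y : E} (hx : ‖x‖ = 1) (hy : ‖y‖ = 1) (hxy : y ≠ -x) :
    ⟪x, y⟫ ≠ -1 := by
  intro h
  apply hxy
  have h1 : ⟪x, -y⟫ = 1 := by rw [inner_neg_right, h]; ring
  have := (inner_eq_one_iff_of_norm_eq_one hx (by rw [norm_neg]; exact hy)).1 h1
  rw [this, neg_neg]

lemma combo_ne_zero {a b : E} (ha : ‖a‖ = 1) (hb : ‖b‖ = 1) (hab : b ≠ -a)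
    {α β : ℝ} (hα : 0 ≤ α) (hβ : 0 ≤ β) (h0 : ¬(α = 0 ∧ β = 0)) :
    α • a + β • b ≠ 0 := by
  intro h
  have h1 : α • a = -(β • b) := by
    rw [← sub_eq_zero]; rw [sub_neg_eq_add]; exact h
  have h2 : α = β := by
    have := congrArg norm h1
    rw [norm_neg, norm_smul, norm_smul, ha, hb] at this
    simpa [abs_of_nonneg hα, abs_of_nonneg hβ] using this
  rcases eq_or_lt_of_le hα with h3 | h3
  · apply h0
    constructor
    · exact h3.symm
    · rw [← h2, ← h3]
  · apply hab
    have h4 : α • a = α • (-b) := by rw [h1, h2]; simp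
    have := smul_right_injective E (ne_of_gt h3) h4
    rw [this]; simp

lemma mem_arc_of_combo {a b : E} {α β : ℝ} (hα : 0 ≤ α) (hβ : 0 ≤ β)
    (hv : α • a + β • b ≠ 0) :
    ‖α • a + β • b‖⁻¹ • (α • a + β • b) ∈ arc a b := by
  set v := α • a + β • b with hvdef
  have hαβ : 0 < α + β := by
    rcases lt_or_eq_of_le (add_nonneg hα hβ) with h | h
    · exact h
    · exfalso; apply hv
      have hα0 : α = 0 := by linarith
      have hβ0 : β = 0 := by linarith
      rw [hvdef, hα0, hβ0]; simp
  refine ⟨β / (α + β), ⟨div_nonneg hβ hαβ.le, (div_le_one hαβ).2 (by linarith)⟩, ?_⟩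
  have hs : (1 : ℝ) - β / (α + β) = α / (α + β) := by field_simp; ring
  have hw : (1 - β / (α + β)) • a + (β / (α + β)) • b = (α + β)⁻¹ • v := by
    rw [hs, hvdef, smul_add, smul_smul, smul_smul, div_eq_inv_mul, div_eq_inv_mul]
  have hnv : ‖v‖ ≠ 0 := norm_ne_zero_iff.2 hv
  rw [hw, smul_smul, norm_smul, Real.norm_eq_abs, abs_of_pos (inv_pos.2 hαβ)]
  congr 1
  field_simp

lemma mem_arc_of_eq {a b q : E} (hq : ‖q‖ = 1) {μ ν ρ : ℝ} (hμ : 0 < μ)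
    (hν : 0 ≤ ν) (hρ : 0 ≤ ρ) (h : μ • q = ν • a + ρ • b) : q ∈ arc a b := by
  have hv : ν • a + ρ • b ≠ 0 := by
    rw [← h]
    intro h2
    rw [smul_eq_zero] at h2
    rcases h2 with h2 | h2
    · exact (ne_of_gt hμ) h2
    · rw [h2] at hq; simp at hq
  have := mem_arc_of_combo hν hρ hv
  rw [← h, norm_smul, Real.norm_eq_abs, abs_of_pos hμ, hq, mul_one, smul_smul,
    inv_mul_cancel₀ (ne_of_gt hμ), one_smul] at this
  exact this

lemma left_mem_arc {a b : E} (ha : ‖a‖ = 1) : a ∈ arc a b :=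
  mem_arc_of_eq (μ := 1) (ν := 1) (ρ := 0) ha one_pos zero_le_one le_rfl (by module)

lemma right_mem_arc {a b : E} (hb : ‖b‖ = 1) : b ∈ arc a b :=
  mem_arc_of_eq (μ := 1) (ν := 0) (ρ := 1) hb one_pos le_rfl zero_le_one (by module)

end helpers

section trig

variable {d : ℕ}

local notation "E" => EuclideanSpace ℝ (Fin (d + 1))

lemma arc_comm (a b : E) : arc a b = arc b a := by
  have key : ∀ u v : E, arc u v ⊆ arc v u := by
    rintro u v z ⟨s, ⟨h0, h1⟩, rfl⟩
    refine ⟨1 - s, ⟨by linarith, by linarith⟩, ?_⟩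
    rw [show ((1:ℝ) - (1 - s)) • v + (1 - s) • u = (1 - s) • u + s • v from by module]
  exact le_antisymm (key a b) (key b a)

lemma sdist_add_of_mem_arc {a b x : E} (ha : ‖a‖ = 1) (hb : ‖b‖ = 1)
    (hab : b ≠ -a) (hx : x ∈ arc a b) :
    sdist a x + sdist x b = sdist a b := by
  obtain ⟨s, ⟨hs0, hs1⟩, hxdef⟩ := hx
  have haa : ⟪a, a⟫ = 1 := by rw [real_inner_self_eq_norm_sq, ha]; norm_num
  have hbb : ⟪b, b⟫ = 1 := by rw [real_inner_self_eq_norm_sq, hb]; norm_num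
  set c := ⟪a, b⟫ with hcdef
  have hc1 : -1 ≤ c := neg_one_le_inner' ha hb
  have hc2 : c ≤ 1 := inner_le_one' ha hb
  have hc3 : (0:ℝ) ≤ 1 - c ^ 2 := by nlinarith [mul_nonneg (by linarith : (0:ℝ) ≤ 1 - c) (by linarith : (0:ℝ) ≤ 1 + c)]
  set w : E := (1 - s) • a + s • b with hwdef
  have hw0 : w ≠ 0 := combo_ne_zero ha hb hab (by linarith) hs0
    (by rintro ⟨h1, h2⟩; rw [h2] at h1; norm_num at h1)
  set n := ‖w‖ with hndef
  have hn : 0 < n := norm_pos_iff.2 hw0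
  have hinv : n⁻¹ * n = 1 := inv_mul_cancel₀ hn.ne'
  have hN : n ^ 2 = (1 - s) ^ 2 + 2 * s * (1 - s) * c + s ^ 2 := by
    rw [hndef, ← real_inner_self_eq_norm_sq, hwdef]
    rw [real_inner_add_add_self]
    simp only [real_inner_smul_left, real_inner_smul_right]
    rw [haa, hbb, ← hcdef]; ring
  have hu : ⟪a, x⟫ = n⁻¹ * ((1 - s) + s * c) := by
    rw [hxdef, hwdef]
    simp only [real_inner_smul_right, inner_add_right]
    rw [haa, ← hcdef]; ring
  have hv : ⟪x, b⟫ = n⁻¹ * ((1 - s) * c + s) := by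
    rw [hxdef, hwdef]
    simp only [real_inner_smul_left, inner_add_left]
    rw [hbb, ← hcdef]; ring
  have hxu : ‖x‖ = 1 := by
    rw [hxdef, norm_smul, norm_inv, norm_norm]
    exact inv_mul_cancel₀ hn.ne'
  have hu1 : -1 ≤ ⟪a, x⟫ := neg_one_le_inner' ha hxu
  have hu2 : ⟪a, x⟫ ≤ 1 := inner_le_one' ha hxu
  have hv1 : -1 ≤ ⟪x, b⟫ := neg_one_le_inner' hxu hb
  have hv2 : ⟪x, b⟫ ≤ 1 := inner_le_one' hxu hb
  have husq : n ^ 2 * (1 - ⟪a, x⟫ ^ 2) = s ^ 2 * (1 - c ^ 2) := by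
    rw [hu]
    linear_combination hN - ((1 - s) + s * c) ^ 2 * (n⁻¹ * n + 1) * hinv
  have hvsq : n ^ 2 * (1 - ⟪x, b⟫ ^ 2) = (1 - s) ^ 2 * (1 - c ^ 2) := by
    rw [hv]
    linear_combination hN - ((1 - s) * c + s) ^ 2 * (n⁻¹ * n + 1) * hinv
  have hup : (0:ℝ) ≤ 1 - ⟪a, x⟫ ^ 2 := by
    nlinarith [mul_nonneg (by linarith : (0:ℝ) ≤ 1 - ⟪a, x⟫) (by linarith : (0:ℝ) ≤ 1 + ⟪a, x⟫)]
  have hvp : (0:ℝ) ≤ 1 - ⟪x, b⟫ ^ 2 := by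
    nlinarith [mul_nonneg (by linarith : (0:ℝ) ≤ 1 - ⟪x, b⟫) (by linarith : (0:ℝ) ≤ 1 + ⟪x, b⟫)]
  have hsqrt : √(1 - ⟪a, x⟫ ^ 2) * √(1 - ⟪x, b⟫ ^ 2)
      = s * (1 - s) * (1 - c ^ 2) / n ^ 2 := by
    rw [← Real.sqrt_mul hup]
    have hprod : (1 - ⟪a, x⟫ ^ 2) * (1 - ⟪x, b⟫ ^ 2)
        = (s * (1 - s) * (1 - c ^ 2) / n ^ 2) ^ 2 := by
      rw [div_pow, eq_div_iff (by positivity : ((n:ℝ) ^ 2) ^ 2 ≠ 0)]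
      calc (1 - ⟪a, x⟫ ^ 2) * (1 - ⟪x, b⟫ ^ 2) * (n ^ 2) ^ 2
          = (n ^ 2 * (1 - ⟪a, x⟫ ^ 2)) * (n ^ 2 * (1 - ⟪x, b⟫ ^ 2)) := by ring
        _ = (s ^ 2 * (1 - c ^ 2)) * ((1 - s) ^ 2 * (1 - c ^ 2)) := by rw [husq, hvsq]
        _ = (s * (1 - s) * (1 - c ^ 2)) ^ 2 := by ring
    rw [hprod, Real.sqrt_sq]
    have h1s : (0:ℝ) ≤ 1 - s := by linarith
    have := mul_nonneg (mul_nonneg hs0 h1s) hc3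
    positivity
  have hcos : Real.cos (Real.arccos ⟪a, x⟫ + Real.arccos ⟪x, b⟫) = c := by
    rw [Real.cos_add, Real.cos_arccos hu1 hu2, Real.cos_arccos hv1 hv2,
      Real.sin_arccos, Real.sin_arccos, hsqrt, hu, hv]
    have key : ((1 - s) + s * c) * ((1 - s) * c + s) - s * (1 - s) * (1 - c ^ 2)
        = c * n ^ 2 := by linear_combination -c * hN
    linear_combination (n⁻¹ * n⁻¹) * key + c * (n⁻¹ * n + 1) * hinv
  have hsum0 : 0 ≤ Real.arccos ⟪a, x⟫ + Real.arccos ⟪x, b⟫ :=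
    add_nonneg (Real.arccos_nonneg _) (Real.arccos_nonneg _)
  have hsumπ : Real.arccos ⟪a, x⟫ + Real.arccos ⟪x, b⟫ ≤ π := by
    have huv : -⟪a, x⟫ ≤ ⟪x, b⟫ := by
      rw [hu, hv]
      have h1 : (0:ℝ) ≤ n⁻¹ * (1 + c) :=
        mul_nonneg (inv_nonneg.2 hn.le) (by linarith)
      have h2 : n⁻¹ * (1 - s + s * c) + n⁻¹ * ((1 - s) * c + s) = n⁻¹ * (1 + c) := by ring
      linarith
    have h2 := arccos_le_arccos' huv
    rw [Real.arccos_neg] at h2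
    linarith
  have := Real.arccos_cos hsum0 hsumπ
  calc sdist a x + sdist x b
      = Real.arccos ⟪a, x⟫ + Real.arccos ⟪x, b⟫ := rfl
    _ = Real.arccos (Real.cos (Real.arccos ⟪a, x⟫ + Real.arccos ⟪x, b⟫)) := this.symm
    _ = Real.arccos c := by rw [hcos]
    _ = sdist a b := rfl

end trig

section trig2

variable {d : ℕ}

local notation "E" => EuclideanSpace ℝ (Fin (d + 1))

lemma sdist_triangle' {a b x : E} (ha : ‖a‖ = 1) (hb : ‖b‖ = 1) (hx : ‖x‖ = 1) :
    sdist a b ≤ sdist a x + sdist x b := by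
  have hxx : ⟪x, x⟫ = 1 := by rw [real_inner_self_eq_norm_sq, hx]; norm_num
  have hu1 : -1 ≤ ⟪a, x⟫ := neg_one_le_inner' ha hx
  have hu2 : ⟪a, x⟫ ≤ 1 := inner_le_one' ha hx
  have hv1 : -1 ≤ ⟪x, b⟫ := neg_one_le_inner' hx hb
  have hv2 : ⟪x, b⟫ ≤ 1 := inner_le_one' hx hb
  by_cases hπ : π ≤ Real.arccos ⟪a, x⟫ + Real.arccos ⟪x, b⟫
  · exact le_trans (Real.arccos_le_pi _) hπ
  push_neg at hπ
  have hinner : ⟪a - ⟪a, x⟫ • x, b - ⟪x, b⟫ • x⟫ = ⟪a, b⟫ - ⟪a, x⟫ * ⟪x, b⟫ := by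
    simp only [inner_sub_left, inner_sub_right, real_inner_smul_left, real_inner_smul_right]
    rw [hxx, real_inner_comm x a]
    ring
  have hna : ‖a - ⟪a, x⟫ • x‖ = √(1 - ⟪a, x⟫ ^ 2) := by
    have h2 : ‖a - ⟪a, x⟫ • x‖ ^ 2 = 1 - ⟪a, x⟫ ^ 2 := by
      rw [← real_inner_self_eq_norm_sq]
      simp only [inner_sub_left, inner_sub_right, real_inner_smul_left, real_inner_smul_right]
      rw [hxx, real_inner_comm x a, real_inner_self_eq_norm_sq, ha]
      ring
    rw [← h2, Real.sqrt_sq (norm_nonneg _)]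
  have hnb : ‖b - ⟪x, b⟫ • x‖ = √(1 - ⟪x, b⟫ ^ 2) := by
    have h2 : ‖b - ⟪x, b⟫ • x‖ ^ 2 = 1 - ⟪x, b⟫ ^ 2 := by
      rw [← real_inner_self_eq_norm_sq]
      simp only [inner_sub_left, inner_sub_right, real_inner_smul_left, real_inner_smul_right]
      rw [hxx, real_inner_comm x b, real_inner_self_eq_norm_sq, hb]
      ring
    rw [← h2, Real.sqrt_sq (norm_nonneg _)]
  have hcs := (abs_le.1 (abs_real_inner_le_norm (a - ⟪a, x⟫ • x) (b - ⟪x, b⟫ • x))).1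
  rw [hinner, hna, hnb] at hcs
  have key : Real.cos (Real.arccos ⟪a, x⟫ + Real.arccos ⟪x, b⟫) ≤ ⟪a, b⟫ := by
    rw [Real.cos_add, Real.cos_arccos hu1 hu2, Real.cos_arccos hv1 hv2,
      Real.sin_arccos, Real.sin_arccos]
    linarith
  calc sdist a b = Real.arccos ⟪a, b⟫ := rfl
    _ ≤ Real.arccos (Real.cos (Real.arccos ⟪a, x⟫ + Real.arccos ⟪x, b⟫)) :=
        arccos_le_arccos' key
    _ = Real.arccos ⟪a, x⟫ + Real.arccos ⟪x, b⟫ :=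
        Real.arccos_cos (add_nonneg (Real.arccos_nonneg _) (Real.arccos_nonneg _)) hπ.le
    _ = sdist a x + sdist x b := rfl

lemma mem_arc_of_sdist_eq {a b x : E} (ha : ‖a‖ = 1) (hb : ‖b‖ = 1) (hx : ‖x‖ = 1)
    (hab : b ≠ -a) (h : sdist a x + sdist x b = sdist a b) : x ∈ arc a b := by
  have hxx : ⟪x, x⟫ = 1 := by rw [real_inner_self_eq_norm_sq, hx]; norm_num
  have hu1 : -1 ≤ ⟪a, x⟫ := neg_one_le_inner' ha hx
  have hu2 : ⟪a, x⟫ ≤ 1 := inner_le_one' ha hx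
  have hv1 : -1 ≤ ⟪x, b⟫ := neg_one_le_inner' hx hb
  have hv2 : ⟪x, b⟫ ≤ 1 := inner_le_one' hx hb
  have hc1 : -1 ≤ ⟪a, b⟫ := neg_one_le_inner' ha hb
  have hc2 : ⟪a, b⟫ ≤ 1 := inner_le_one' ha hb
  have hcne : ⟪a, b⟫ ≠ -1 := inner_ne_neg_one ha hb hab
  have h' : Real.arccos ⟪a, x⟫ + Real.arccos ⟪x, b⟫ = Real.arccos ⟪a, b⟫ := h
  have hABπ : Real.arccos ⟪a, x⟫ + Real.arccos ⟪x, b⟫ ≤ π := by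
    rw [h']; exact Real.arccos_le_pi _
  have hcπ : Real.arccos ⟪a, b⟫ < π := by
    rcases lt_or_eq_of_le (Real.arccos_le_pi ⟪a, b⟫) with h4 | h4
    · exact h4
    · exact absurd (le_antisymm (Real.arccos_eq_pi.1 h4) hc1) hcne
  have hcos : ⟪a, x⟫ * ⟪x, b⟫ - √(1 - ⟪a, x⟫ ^ 2) * √(1 - ⟪x, b⟫ ^ 2) = ⟪a, b⟫ := by
    have := congrArg Real.cos h'
    rw [Real.cos_add, Real.cos_arccos hu1 hu2, Real.cos_arccos hv1 hv2,
      Real.sin_arccos, Real.sin_arccos, Real.cos_arccos hc1 hc2] at this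
    exact this
  have hinner : ⟪a - ⟪a, x⟫ • x, b - ⟪x, b⟫ • x⟫ = ⟪a, b⟫ - ⟪a, x⟫ * ⟪x, b⟫ := by
    simp only [inner_sub_left, inner_sub_right, real_inner_smul_left, real_inner_smul_right]
    rw [hxx, real_inner_comm x a]
    ring
  have hna : ‖a - ⟪a, x⟫ • x‖ = √(1 - ⟪a, x⟫ ^ 2) := by
    have h2 : ‖a - ⟪a, x⟫ • x‖ ^ 2 = 1 - ⟪a, x⟫ ^ 2 := by
      rw [← real_inner_self_eq_norm_sq]
      simp only [inner_sub_left, inner_sub_right, real_inner_smul_left, real_inner_smul_right]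
      rw [hxx, real_inner_comm x a, real_inner_self_eq_norm_sq, ha]
      ring
    rw [← h2, Real.sqrt_sq (norm_nonneg _)]
  have hnb : ‖b - ⟪x, b⟫ • x‖ = √(1 - ⟪x, b⟫ ^ 2) := by
    have h2 : ‖b - ⟪x, b⟫ • x‖ ^ 2 = 1 - ⟪x, b⟫ ^ 2 := by
      rw [← real_inner_self_eq_norm_sq]
      simp only [inner_sub_left, inner_sub_right, real_inner_smul_left, real_inner_smul_right]
      rw [hxx, real_inner_comm x b, real_inner_self_eq_norm_sq, hb]
      ring
    rw [← h2, Real.sqrt_sq (norm_nonneg _)]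
  by_cases ha0 : a - ⟪a, x⟫ • x = 0
  · -- a is a multiple of x
    have hax : a = ⟪a, x⟫ • x := by rwa [sub_eq_zero] at ha0
    have habs : |⟪a, x⟫| = 1 := by
      have := congrArg norm hax
      rw [ha, norm_smul, hx, mul_one, Real.norm_eq_abs] at this
      exact this.symm
    rcases abs_eq (by norm_num : (0:ℝ) ≤ 1) |>.1 habs with h5 | h5
    · have : a = x := by rw [hax, h5, one_smul]
      rw [← this]; exact left_mem_arc ha
    · exfalso
      have hA : Real.arccos ⟪a, x⟫ = π := by rw [h5, Real.arccos_neg_one]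
      have hB := Real.arccos_nonneg ⟪x, b⟫
      have := Real.arccos_le_pi ⟪a, b⟫
      have h6 : Real.arccos ⟪a, b⟫ = π := by rw [← h', hA]; linarith
      exact absurd (le_antisymm (Real.arccos_eq_pi.1 h6) hc1) hcne
  by_cases hb0 : b - ⟪x, b⟫ • x = 0
  · have hbx : b = ⟪x, b⟫ • x := by rwa [sub_eq_zero] at hb0
    have habs : |⟪x, b⟫| = 1 := by
      have := congrArg norm hbx
      rw [hb, norm_smul, hx, mul_one, Real.norm_eq_abs] at this
      exact this.symm
    rcases abs_eq (by norm_num : (0:ℝ) ≤ 1) |>.1 habs with h5 | h5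
    · have : b = x := by rw [hbx, h5, one_smul]
      rw [← this]; exact right_mem_arc hb
    · exfalso
      have hB : Real.arccos ⟪x, b⟫ = π := by rw [h5, Real.arccos_neg_one]
      have hA := Real.arccos_nonneg ⟪a, x⟫
      have h6 : Real.arccos ⟪a, b⟫ = π := by rw [← h', hB]; linarith
      exact absurd (le_antisymm (Real.arccos_eq_pi.1 h6) hc1) hcne
  -- main case: Cauchy-Schwarz equality
  have hinner2 : ⟪a - ⟪a, x⟫ • x, b - ⟪x, b⟫ • x⟫
      = -(‖a - ⟪a, x⟫ • x‖ * ‖b - ⟪x, b⟫ • x‖) := by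
    rw [hinner, hna, hnb]; linarith
  have hcs2 : ⟪-(a - ⟪a, x⟫ • x), b - ⟪x, b⟫ • x⟫
      = ‖-(a - ⟪a, x⟫ • x)‖ * ‖b - ⟪x, b⟫ • x‖ := by
    rw [inner_neg_left, norm_neg, hinner2]; ring
  have hkey := inner_eq_norm_mul_iff_real.1 hcs2
  rw [norm_neg] at hkey
  -- hkey : ‖b'‖ • -(a - u•x) = ‖a'‖ • (b - v•x)
  have hnapos : 0 < ‖a - ⟪a, x⟫ • x‖ := norm_pos_iff.2 ha0
  have hnbpos : 0 < ‖b - ⟪x, b⟫ • x‖ := norm_pos_iff.2 hb0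
  have hult : ⟪a, x⟫ < 1 := by
    by_contra h7
    push_neg at h7
    have h8 : ⟪a, x⟫ = 1 := le_antisymm hu2 h7
    rw [hna, h8] at hnapos
    norm_num at hnapos
  -- κ := ‖a'‖ * v + ‖b'‖ * u
  have hAB0 : 0 < Real.arccos ⟪a, x⟫ + Real.arccos ⟪x, b⟫ :=
    lt_of_lt_of_le (Real.arccos_pos.2 hult) (le_add_of_nonneg_right (Real.arccos_nonneg _))
  have hABπ' : Real.arccos ⟪a, x⟫ + Real.arccos ⟪x, b⟫ < π := by rw [h']; exact hcπ
  have hsinpos := Real.sin_pos_of_pos_of_lt_pi hAB0 hABπ'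
  have hsin : Real.sin (Real.arccos ⟪a, x⟫ + Real.arccos ⟪x, b⟫)
      = ‖a - ⟪a, x⟫ • x‖ * ⟪x, b⟫ + ‖b - ⟪x, b⟫ • x‖ * ⟪a, x⟫ := by
    rw [Real.sin_add, Real.sin_arccos, Real.sin_arccos,
      Real.cos_arccos hu1 hu2, Real.cos_arccos hv1 hv2, hna, hnb]
    ring
  have hκ : 0 < ‖a - ⟪a, x⟫ • x‖ * ⟪x, b⟫ + ‖b - ⟪x, b⟫ • x‖ * ⟪a, x⟫ := by
    rw [← hsin]; exact hsinpos
  have hvec : (‖a - ⟪a, x⟫ • x‖ * ⟪x, b⟫ + ‖b - ⟪x, b⟫ • x‖ * ⟪a, x⟫) • x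
      = ‖b - ⟪x, b⟫ • x‖ • a + ‖a - ⟪a, x⟫ • x‖ • b := by
    have step : ‖b - ⟪x, b⟫ • x‖ • a + ‖a - ⟪a, x⟫ • x‖ • b
        = ‖b - ⟪x, b⟫ • x‖ • a + ((‖a - ⟪a, x⟫ • x‖ * ⟪x, b⟫) • x
          + ‖a - ⟪a, x⟫ • x‖ • (b - ⟪x, b⟫ • x)) := by module
    rw [step, ← hkey]
    module
  exact mem_arc_of_eq hx hκ (norm_nonneg _) (norm_nonneg _) hvec

end trig2

section body

variable {d : ℕ}

local notation "E" => EuclideanSpace ℝ (Fin (d + 1))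

variable {D : Set (EuclideanSpace ℝ (Fin (d + 1)))} {δ : ℝ}

lemma sdist_self' {x : E} (hx : ‖x‖ = 1) : sdist x x = 0 := by
  unfold sdist
  rw [real_inner_self_eq_norm_sq, hx]
  norm_num

lemma ne_neg_of_mem (hD : SphConvex D) {x y : E} (hx : x ∈ D) (hy : y ∈ D) : y ≠ -x := by
  intro h; exact hD.2.1 x hx (h ▸ hy)

lemma arc_subset_body (hD : SphConvex D) {a b : E} (ha : a ∈ D) (hb : b ∈ D) :
    arc a b ⊆ D := by
  rintro z ⟨s, ⟨hs0, hs1⟩, rfl⟩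
  have hw0 : (1 - s) • a + s • b ≠ 0 :=
    combo_ne_zero (hD.1 ha) (hD.1 hb) (ne_neg_of_mem hD ha hb) (by linarith) hs0
      (by rintro ⟨h1, h2⟩; rw [h2] at h1; norm_num at h1)
  have hmemA : a ∈ {y : E | ∃ t : ℝ, 0 ≤ t ∧ ∃ x ∈ D, y = t • x} :=
    ⟨1, zero_le_one, a, ha, (one_smul ℝ a).symm⟩
  have hmemB : b ∈ {y : E | ∃ t : ℝ, 0 ≤ t ∧ ∃ x ∈ D, y = t • x} :=
    ⟨1, zero_le_one, b, hb, (one_smul ℝ b).symm⟩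
  have hw : (1 - s) • a + s • b ∈ {y : E | ∃ t : ℝ, 0 ≤ t ∧ ∃ x ∈ D, y = t • x} :=
    hD.2.2 hmemA hmemB (by linarith) hs0 (by ring)
  obtain ⟨t, ht, y, hy, hwy⟩ := hw
  have hyu : ‖y‖ = 1 := hD.1 hy
  have hnorm : ‖(1 - s) • a + s • b‖ = t := by
    rw [hwy, norm_smul, hyu, mul_one, Real.norm_eq_abs, abs_of_nonneg ht]
  have htpos : (0:ℝ) < t := by
    rcases lt_or_eq_of_le ht with h | h
    · exact h
    · exfalso; apply hw0; rw [hwy, ← h, zero_smul]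
  rw [hnorm, hwy, smul_smul, inv_mul_cancel₀ htpos.ne', one_smul]
  exact hy

lemma sdist_le_delta (hδ : sphDiam D = δ) {x y : E} (hx : x ∈ D) (hy : y ∈ D) :
    sdist x y ≤ δ := by
  have hbdd : BddAbove {r | ∃ x ∈ D, ∃ y ∈ D, r = sdist x y} := by
    refine ⟨π, ?_⟩
    rintro r ⟨x, _, y, _, rfl⟩
    exact Real.arccos_le_pi _
  have hmem : sdist x y ∈ {r | ∃ x ∈ D, ∃ y ∈ D, r = sdist x y} := ⟨x, hx, y, hy, rfl⟩
  rw [← hδ]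
  exact le_csSup hbdd hmem

lemma combo_zero (hD : SphConvex D) {x y : E} (hx : x ∈ D) (hy : y ∈ D) {α β : ℝ}
    (hα : 0 ≤ α) (hβ : 0 ≤ β) (h : α • x + β • y = 0) : α = 0 ∧ β = 0 := by
  by_contra hne
  exact combo_ne_zero (hD.1 hx) (hD.1 hy) (ne_neg_of_mem hD hx hy) hα hβ hne h

lemma collapse (hD : SphConvex D) (hδ : sphDiam D = δ) {p q x : E}
    (hp : p ∈ D) (hq : q ∈ D) (hx : x ∈ D) (hpq : sdist p q = δ)
    (hmem : q ∈ arc p x) : q = x := by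
  have hadd := sdist_add_of_mem_arc (hD.1 hp) (hD.1 hx) (ne_neg_of_mem hD hp hx) hmem
  have hle := sdist_le_delta hδ hp hx
  have h0 : sdist q x ≤ 0 := by rw [hpq] at hadd; linarith
  exact eq_of_sdist_eq_zero (hD.1 hq) (hD.1 hx) (le_antisymm h0 (Real.arccos_nonneg _))

lemma delta_zero_case (hD : SphConvex D) (hδ : sphDiam D = δ) {a b c dd : E}
    (ha : a ∈ D) (_hb : b ∈ D) (hc : c ∈ D) (_hdd : dd ∈ D) (hδ0 : δ ≤ 0) :
    (arc a b ∩ arc c dd).Nonempty := by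
  have h1 : sdist a c ≤ δ := sdist_le_delta hδ ha hc
  have h2 : a = c := eq_of_sdist_eq_zero (hD.1 ha) (hD.1 hc)
    (le_antisymm (by linarith) (Real.arccos_nonneg _))
  refine ⟨a, left_mem_arc (hD.1 ha), ?_⟩
  rw [h2]
  exact left_mem_arc (hD.1 hc)

lemma sing_case (hD : SphConvex D) (hδ : sphDiam D = δ) {p q r r' : E}
    (hp : p ∈ D) (hq : q ∈ D) (hr : r ∈ D) (hr' : r' ∈ D) (hpq : sdist p q = δ)
    {μ ν ρ σ : ℝ} (hμ : 0 ≤ μ) (hν : 0 ≤ ν) (hρ : 0 ≤ ρ) (hσ : 0 ≤ σ)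
    (heq : μ • q = ν • p + (ρ • r + σ • r'))
    (hall : ¬(μ = 0 ∧ ν = 0 ∧ ρ = 0 ∧ σ = 0)) :
    q ∈ arc r r' ∨ δ ≤ 0 := by
  by_cases hz : ρ • r + σ • r' = 0
  · obtain ⟨hρ0, hσ0⟩ := combo_zero hD hr hr' hρ hσ hz
    rw [hz, add_zero] at heq
    have hμν : μ = ν := by
      have h2 := congrArg norm heq
      rw [norm_smul, norm_smul, hD.1 hq, hD.1 hp, mul_one, mul_one,
        Real.norm_eq_abs, Real.norm_eq_abs, abs_of_nonneg hμ, abs_of_nonneg hν] at h2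
      exact h2
    rcases eq_or_lt_of_le hμ with hμ0 | hμpos
    · exact absurd ⟨hμ0.symm, by rw [← hμν, ← hμ0], hρ0, hσ0⟩ hall
    · have hqp : q = p := by
        have hheq : μ • q = μ • p := by rw [heq, hμν]
        exact smul_right_injective _ hμpos.ne' hheq
      right
      rw [hqp] at hpq
      rw [← hpq, sdist_self' (hD.1 hp)]
  · have hxarc : ‖ρ • r + σ • r'‖⁻¹ • (ρ • r + σ • r') ∈ arc r r' :=
      mem_arc_of_combo hρ hσ hz
    have hxD : ‖ρ • r + σ • r'‖⁻¹ • (ρ • r + σ • r') ∈ D :=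
      arc_subset_body hD hr hr' hxarc
    have hznorm : 0 < ‖ρ • r + σ • r'‖ := norm_pos_iff.2 hz
    rcases eq_or_lt_of_le hμ with hμ0 | hμpos
    · exfalso
      have h0 : ν • p + ‖ρ • r + σ • r'‖ • (‖ρ • r + σ • r'‖⁻¹ • (ρ • r + σ • r')) = 0 := by
        rw [smul_smul, mul_inv_cancel₀ hznorm.ne', one_smul, ← heq, ← hμ0, zero_smul]
      obtain ⟨_, h2⟩ := combo_zero hD hp hxD hν (norm_nonneg _) h0
      exact hznorm.ne' h2
    · have heq2 : μ • q = ν • p + ‖ρ • r + σ • r'‖ • (‖ρ • r + σ • r'‖⁻¹ • (ρ • r + σ • r')) := by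
        rw [smul_smul, mul_inv_cancel₀ hznorm.ne', one_smul]
        exact heq
      have hqmem := mem_arc_of_eq (hD.1 hq) hμpos hν (norm_nonneg _) heq2
      have hqx := collapse hD hδ hp hq hxD hpq hqmem
      left
      rw [hqx]
      exact hxarc

lemma chain_case (hD : SphConvex D) (hδ : sphDiam D = δ) {a b c dd x : E}
    (ha : a ∈ D) (hb : b ∈ D) (hc : c ∈ D) (hdd : dd ∈ D) (hx : x ∈ D)
    (hab : sdist a b = δ) (hcd : sdist c dd = δ)
    (hsum : sdist a x + sdist x b + (sdist c x + sdist x dd) ≤ 2 * δ) :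
    (arc a b ∩ arc c dd).Nonempty := by
  have t1 := sdist_triangle' (hD.1 ha) (hD.1 hb) (hD.1 hx)
  have t2 := sdist_triangle' (hD.1 hc) (hD.1 hdd) (hD.1 hx)
  have e1 : sdist a x + sdist x b = sdist a b := by
    rw [hab] at t1 ⊢
    rw [hcd] at t2
    linarith
  have e2 : sdist c x + sdist x dd = sdist c dd := by
    rw [hab] at t1
    rw [hcd] at t2 ⊢
    linarith
  exact ⟨x, mem_arc_of_sdist_eq (hD.1 ha) (hD.1 hb) (hD.1 hx) (ne_neg_of_mem hD ha hb) e1,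
    mem_arc_of_sdist_eq (hD.1 hc) (hD.1 hdd) (hD.1 hx) (ne_neg_of_mem hD hc hdd) e2⟩

lemma master_case (hD : SphConvex D) (hδ : sphDiam D = δ) {a b c dd : E}
    (ha : a ∈ D) (hb : b ∈ D) (hc : c ∈ D) (hdd : dd ∈ D)
    (hab : sdist a b = δ) (hcd : sdist c dd = δ)
    {α β γ θ : ℝ} (heq : α • a + β • b + γ • c + θ • dd = 0)
    (hne : ¬(α = 0 ∧ β = 0 ∧ γ = 0 ∧ θ = 0)) (hα : 0 ≤ α) :
    (arc a b ∩ arc c dd).Nonempty := by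
  rcases le_total 0 β with hβ | hβ <;> rcases le_total 0 γ with hγ | hγ <;>
    rcases le_total 0 θ with hθ | hθ
  · -- (+,+,+) : contradiction via antipodes
    exfalso
    by_cases hv : α • a + β • b = 0
    · obtain ⟨h1, h2⟩ := combo_zero hD ha hb hα hβ hv
      have hw : γ • c + θ • dd = 0 := by
        rw [h1, h2] at heq; simpa using heq
      obtain ⟨h3, h4⟩ := combo_zero hD hc hdd hγ hθ hw
      exact hne ⟨h1, h2, h3, h4⟩
    · have hx : ‖α • a + β • b‖⁻¹ • (α • a + β • b) ∈ D :=
        arc_subset_body hD ha hb (mem_arc_of_combo hα hβ hv)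
      have h9 : (α • a + β • b) + (γ • c + θ • dd) = 0 := by
        rw [← heq]; module
      have hwv : γ • c + θ • dd = -(α • a + β • b) := by
        rw [← sub_eq_zero, sub_neg_eq_add, add_comm (γ • c + θ • dd) (α • a + β • b)]
        exact h9
      have hw0 : γ • c + θ • dd ≠ 0 := by rw [hwv]; exact neg_ne_zero.2 hv
      have hy : ‖γ • c + θ • dd‖⁻¹ • (γ • c + θ • dd) ∈ D :=
        arc_subset_body hD hc hdd (mem_arc_of_combo hγ hθ hw0)
      have h10 : ‖γ • c + θ • dd‖⁻¹ • (γ • c + θ • dd)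
          = -(‖α • a + β • b‖⁻¹ • (α • a + β • b)) := by
        rw [hwv, norm_neg, smul_neg]
      rw [h10] at hy
      exact hD.2.1 _ hx hy
  · -- (+,+,-) : singleton dd
    have heq2 : (-θ) • dd = γ • c + (α • a + β • b) := by
      have h9 : (-θ) • dd - (γ • c + (α • a + β • b)) = -(α • a + β • b + γ • c + θ • dd) := by
        module
      rw [heq, neg_zero] at h9
      exact sub_eq_zero.1 h9
    rcases sing_case hD hδ hc hdd ha hb hcd (by linarith) hγ hα hβ heq2
        (by rintro ⟨h1, h2, h3, h4⟩; exact hne ⟨h3, h4, h2, by linarith⟩) with hq | h0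
    · exact ⟨dd, hq, right_mem_arc (hD.1 hdd)⟩
    · exact delta_zero_case hD hδ ha hb hc hdd h0
  · -- (+,-,+) : singleton c
    have heq2 : (-γ) • c = θ • dd + (α • a + β • b) := by
      have h9 : (-γ) • c - (θ • dd + (α • a + β • b)) = -(α • a + β • b + γ • c + θ • dd) := by
        module
      rw [heq, neg_zero] at h9
      exact sub_eq_zero.1 h9
    rcases sing_case hD hδ hdd hc ha hb (by rw [sdist_comm']; exact hcd) (by linarith) hθ hα hβ
        heq2 (by rintro ⟨h1, h2, h3, h4⟩; exact hne ⟨h3, h4, by linarith, h2⟩) with hq | h0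
    · exact ⟨c, hq, left_mem_arc (hD.1 hc)⟩
    · exact delta_zero_case hD hδ ha hb hc hdd h0
  · -- (+,-,-) : direct crossing of arc a b and arc c dd
    by_cases hm : α • a + β • b = 0
    · obtain ⟨h1, h2⟩ := combo_zero hD ha hb hα hβ hm
      have hw : (-γ) • c + (-θ) • dd = 0 := by
        rw [h1, h2] at heq
        have h9 : (-γ) • c + (-θ) • dd = -((0:ℝ) • a + (0:ℝ) • b + γ • c + θ • dd) := by module
        rw [heq, neg_zero] at h9
        exact h9
      obtain ⟨h3, h4⟩ := combo_zero hD hc hdd (by linarith) (by linarith) hw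
      exact absurd ⟨h1, h2, by linarith, by linarith⟩ hne
    · have heq2 : α • a + β • b = (-γ) • c + (-θ) • dd := by
        have h9 : α • a + β • b - ((-γ) • c + (-θ) • dd)
            = α • a + β • b + γ • c + θ • dd := by module
        rw [heq] at h9
        exact sub_eq_zero.1 h9
      refine ⟨‖α • a + β • b‖⁻¹ • (α • a + β • b), mem_arc_of_combo hα hβ hm, ?_⟩
      rw [heq2] at hm ⊢
      exact mem_arc_of_combo (by linarith) (by linarith) hm
  · -- (-,+,+) : singleton b
    have heq2 : (-β) • b = α • a + (γ • c + θ • dd) := by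
      have h9 : (-β) • b - (α • a + (γ • c + θ • dd)) = -(α • a + β • b + γ • c + θ • dd) := by
        module
      rw [heq, neg_zero] at h9
      exact sub_eq_zero.1 h9
    rcases sing_case hD hδ ha hb hc hdd hab (by linarith) hα hγ hθ heq2
        (by rintro ⟨h1, h2, h3, h4⟩; exact hne ⟨h2, by linarith, h3, h4⟩) with hq | h0
    · exact ⟨b, right_mem_arc (hD.1 hb), hq⟩
    · exact delta_zero_case hD hδ ha hb hc hdd h0
  · -- (-,+,-) : arcs ac and bd cross
    by_cases hm : α • a + γ • c = 0
    · obtain ⟨h1, h2⟩ := combo_zero hD ha hc hα hγ hm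
      have hw : (-β) • b + (-θ) • dd = 0 := by
        have h9 : (-β) • b + (-θ) • dd
            = (α • a + γ • c) - (α • a + β • b + γ • c + θ • dd) := by module
        rw [heq, hm, sub_zero] at h9
        rw [h9]
      obtain ⟨h3, h4⟩ := combo_zero hD hb hdd (by linarith) (by linarith) hw
      exact absurd ⟨h1, by linarith, h2, by linarith⟩ hne
    · have heq2 : α • a + γ • c = (-β) • b + (-θ) • dd := by
        have h9 : α • a + γ • c - ((-β) • b + (-θ) • dd)
            = α • a + β • b + γ • c + θ • dd := by module
        rw [heq] at h9
        exact sub_eq_zero.1 h9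
      set x := ‖α • a + γ • c‖⁻¹ • (α • a + γ • c) with hxdef
      have hx1 : x ∈ arc a c := mem_arc_of_combo hα hγ hm
      have hm2 : (-β) • b + (-θ) • dd ≠ 0 := by rw [← heq2]; exact hm
      have hx2 : x ∈ arc b dd := by
        rw [hxdef, heq2]
        exact mem_arc_of_combo (by linarith) (by linarith) hm2
      have hxD : x ∈ D := arc_subset_body hD ha hc hx1
      have h1 := sdist_add_of_mem_arc (hD.1 ha) (hD.1 hc) (ne_neg_of_mem hD ha hc) hx1
      have h2 := sdist_add_of_mem_arc (hD.1 hb) (hD.1 hdd) (ne_neg_of_mem hD hb hdd) hx2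
      have hle1 := sdist_le_delta hδ ha hc
      have hle2 := sdist_le_delta hδ hb hdd
      refine chain_case hD hδ ha hb hc hdd hxD hab hcd ?_
      rw [show sdist x b = sdist b x from sdist_comm' x b,
        show sdist c x = sdist x c from sdist_comm' c x]
      linarith
  · -- (-,-,+) : arcs ad and bc cross
    by_cases hm : α • a + θ • dd = 0
    · obtain ⟨h1, h2⟩ := combo_zero hD ha hdd hα hθ hm
      have hw : (-β) • b + (-γ) • c = 0 := by
        have h9 : (-β) • b + (-γ) • c
            = (α • a + θ • dd) - (α • a + β • b + γ • c + θ • dd) := by module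
        rw [heq, hm, sub_zero] at h9
        rw [h9]
      obtain ⟨h3, h4⟩ := combo_zero hD hb hc (by linarith) (by linarith) hw
      exact absurd ⟨h1, by linarith, by linarith, h2⟩ hne
    · have heq2 : α • a + θ • dd = (-β) • b + (-γ) • c := by
        have h9 : α • a + θ • dd - ((-β) • b + (-γ) • c)
            = α • a + β • b + γ • c + θ • dd := by module
        rw [heq] at h9
        exact sub_eq_zero.1 h9
      set x := ‖α • a + θ • dd‖⁻¹ • (α • a + θ • dd) with hxdef
      have hx1 : x ∈ arc a dd := mem_arc_of_combo hα hθ hm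
      have hm2 : (-β) • b + (-γ) • c ≠ 0 := by rw [← heq2]; exact hm
      have hx2 : x ∈ arc b c := by
        rw [hxdef, heq2]
        exact mem_arc_of_combo (by linarith) (by linarith) hm2
      have hxD : x ∈ D := arc_subset_body hD ha hdd hx1
      have h1 := sdist_add_of_mem_arc (hD.1 ha) (hD.1 hdd) (ne_neg_of_mem hD ha hdd) hx1
      have h2 := sdist_add_of_mem_arc (hD.1 hb) (hD.1 hc) (ne_neg_of_mem hD hb hc) hx2
      have hle1 := sdist_le_delta hδ ha hdd
      have hle2 := sdist_le_delta hδ hb hc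
      refine chain_case hD hδ ha hb hc hdd hxD hab hcd ?_
      rw [show sdist x b = sdist b x from sdist_comm' x b,
        show sdist c x = sdist x c from sdist_comm' c x]
      linarith
  · -- (-,-,-) : singleton a
    have heq2 : α • a = (-β) • b + ((-γ) • c + (-θ) • dd) := by
      have h9 : α • a - ((-β) • b + ((-γ) • c + (-θ) • dd))
          = α • a + β • b + γ • c + θ • dd := by module
      rw [heq] at h9
      exact sub_eq_zero.1 h9
    rcases sing_case hD hδ hb ha hc hdd (by rw [sdist_comm']; exact hab) hα (by linarith)
        (by linarith) (by linarith) heq2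
        (by rintro ⟨h1, h2, h3, h4⟩; exact hne ⟨h1, by linarith, by linarith, by linarith⟩)
        with hq | h0
    · exact ⟨a, left_mem_arc (hD.1 ha), hq⟩
    · exact delta_zero_case hD hδ ha hb hc hdd h0

end body

/-- In a body of constant diameter on `S²`, every two diametral chords
intersect. -/
theorem diametral_chords_intersect (δ : ℝ) (D : Set (EuclideanSpace ℝ (Fin 3)))
    (hD : SphBody D) (hcd : ConstDiam D δ)
    (a b c dd : EuclideanSpace ℝ (Fin 3))
    (ha : a ∈ D) (hb : b ∈ D) (hc : c ∈ D) (hdd : dd ∈ D)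
    (hab : sdist a b = δ) (hcdd : sdist c dd = δ) :
    (arc a b ∩ arc c dd).Nonempty := by
  have hDc : SphConvex D := hD.1
  have hδ : sphDiam D = δ := hcd.1
  have hnli : ¬ LinearIndependent ℝ ![a, b, c, dd] := by
    intro h
    have h2 := h.fintype_card_le_finrank
    rw [finrank_euclideanSpace] at h2
    simp at h2
  obtain ⟨g, hgsum, i, hgi⟩ := Fintype.not_linearIndependent_iff.1 hnli
  have hsum : g 0 • a + g 1 • b + g 2 • c + g 3 • dd = 0 := by
    rw [Fin.sum_univ_four] at hgsum
    simpa using hgsum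
  have hne : ¬(g 0 = 0 ∧ g 1 = 0 ∧ g 2 = 0 ∧ g 3 = 0) := by
    rintro ⟨h0, h1, h2, h3⟩
    fin_cases i <;> simp_all
  rcases le_total 0 (g 0) with hα | hα
  · exact master_case hDc hδ ha hb hc hdd hab hcdd hsum hne hα
  · have hsum2 : (-g 0) • a + (-g 1) • b + (-g 2) • c + (-g 3) • dd = 0 := by
      have h9 : (-g 0) • a + (-g 1) • b + (-g 2) • c + (-g 3) • dd
          = -(g 0 • a + g 1 • b + g 2 • c + g 3 • dd) := by module
      rw [hsum, neg_zero] at h9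
      exact h9
    have hne2 : ¬(-g 0 = 0 ∧ -g 1 = 0 ∧ -g 2 = 0 ∧ -g 3 = 0) := by
      rintro ⟨h0, h1, h2, h3⟩
      exact hne ⟨by linarith, by linarith, by linarith, by linarith⟩
    exact master_case hDc hδ ha hb hc hdd hab hcdd hsum2 hne2 (by linarith)

end
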